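/- Suppose that for some integer τ ≥ 1 and some vector x ∈ ℝ^A of Euclidean norm 1 we have U^τ ((1/√d)·N e_u) = x, and that x_a = 0 for every a ∈ A with N(a, v) = 0 (i.e., x is supported on the rows whose unique 1 lies in column v). Then x = (1/√d)·N e_v. -/

import Mathlib

open Matrix

theorem stmt_9 (A 𝒱 : Type*) [Fintype A] [Fintype 𝒱]
    [DecidableEq A] [DecidableEq 𝒱] [Nonempty A] [Nonempty 𝒱]
    (N : Matrix A 𝒱 ℝ)
    (hN01 : ∀ a w, N a w = 0 ∨ N a w = 1)
    (hNrow : ∀ a : A, ∃! w : 𝒱, N a w = 1)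
    (u v : 𝒱) (huv : u ≠ v) (d : ℕ) (hd : 0 < d)
    (hNu : ∑ a : A, N a u = d) (hNv : ∑ a : A, N a v = d)
    (U : Matrix A A ℝ) (hUorth : Uᵀ * U = 1)
    (hUones : Uᵀ *ᵥ (fun _ => 1) = fun _ => 1)
    (τ : ℕ) (hτ : 1 ≤ τ)
    (x : A → ℝ) (hxnorm : ∑ a : A, (x a) ^ 2 = 1)
    (hxeq : (U ^ τ) *ᵥ ((Real.sqrt d)⁻¹ • (N *ᵥ Pi.single u 1)) = x)
    (hxsupp : ∀ a : A, N a v = 0 → x a = 0) :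
    x = (Real.sqrt d)⁻¹ • (N *ᵥ Pi.single v 1) := by
  classical
  have hsd : (0:ℝ) < Real.sqrt d := Real.sqrt_pos.mpr (by exact_mod_cast hd)
  have hsq : Real.sqrt d * Real.sqrt d = (d:ℝ) :=
    Real.mul_self_sqrt (by positivity)
  -- the support set
  set S : Finset A := Finset.univ.filter (fun a => N a v = 1) with hS
  have hScard : (S.card : ℝ) = (d:ℝ) := by
    rw [← hNv]
    rw [Finset.card_filter]
    push_cast
    refine (Finset.sum_congr rfl fun a _ => ?_).symm
    rcases hN01 a v with h | h
    · simp [h]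
    · simp [h]
  -- ones vector is fixed by vecMul with U^n
  have hone : (fun _ => (1:ℝ)) ᵥ* U = fun _ => 1 := by
    rw [← Matrix.mulVec_transpose]; exact hUones
  have hpow : ∀ n : ℕ, (fun _ => (1:ℝ)) ᵥ* (U ^ n) = fun _ => 1 := by
    intro n
    induction n with
    | zero => simp
    | succ n ih => rw [pow_succ, ← Matrix.vecMul_vecMul, ih, hone]
  -- sum of x is sqrt d
  have hsum : ∑ a : A, x a = Real.sqrt d := by
    have h1 : ∑ a : A, x a = dotProduct (fun _ => (1:ℝ)) x := by
      simp [dotProduct]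
    rw [h1, ← hxeq, Matrix.dotProduct_mulVec, hpow τ]
    have h2 : dotProduct (fun _ => (1:ℝ))
        ((Real.sqrt d)⁻¹ • (N *ᵥ Pi.single u 1)) =
        (Real.sqrt d)⁻¹ * ∑ a : A, N a u := by
      simp [dotProduct, Matrix.mulVec, Finset.mul_sum]
    rw [h2, hNu]
    field_simp
    rw [Real.sq_sqrt (by positivity)]
  -- sums restricted to S
  have hxoff : ∀ a ∈ Finset.univ \ S, x a = 0 := by
    intro a ha
    simp only [hS, Finset.mem_sdiff, Finset.mem_filter, Finset.mem_univ,
      true_and, not_true_eq_false] at ha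
    rcases hN01 a v with h | h
    · exact hxsupp a h
    · exact absurd h (by tauto)
  have hsumS : ∑ a ∈ S, x a = Real.sqrt d := by
    rw [← hsum]
    exact Finset.sum_subset (Finset.subset_univ S)
      (fun a _ ha => hxoff a (Finset.mem_sdiff.mpr ⟨Finset.mem_univ a, ha⟩))
  have hsumS2 : ∑ a ∈ S, (x a) ^ 2 = 1 := by
    rw [← hxnorm]
    exact Finset.sum_subset (Finset.subset_univ S)
      (fun a _ ha => by
        rw [hxoff a (Finset.mem_sdiff.mpr ⟨Finset.mem_univ a, ha⟩)]; ring)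
  -- zero sum of squares
  have key : ∑ a ∈ S, (x a - (Real.sqrt d)⁻¹) ^ 2 = 0 := by
    have expand : ∑ a ∈ S, (x a - (Real.sqrt d)⁻¹) ^ 2 =
        (∑ a ∈ S, (x a) ^ 2) - 2 * (Real.sqrt d)⁻¹ * (∑ a ∈ S, x a)
          + (S.card : ℝ) * ((Real.sqrt d)⁻¹) ^ 2 := by
      rw [Finset.sum_congr rfl (fun a _ => by ring_nf :
        ∀ a ∈ S, (x a - (Real.sqrt d)⁻¹) ^ 2 =
          (x a) ^ 2 - 2 * (Real.sqrt d)⁻¹ * x a + ((Real.sqrt d)⁻¹) ^ 2)]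
      rw [Finset.sum_add_distrib, Finset.sum_sub_distrib, ← Finset.mul_sum,
        Finset.sum_const, nsmul_eq_mul]
    rw [expand, hsumS, hsumS2, hScard]
    have h1 : (Real.sqrt d)⁻¹ * Real.sqrt d = 1 := inv_mul_cancel₀ (ne_of_gt hsd)
    have h2 : (d:ℝ) * ((Real.sqrt d)⁻¹) ^ 2 = 1 := by
      rw [← hsq]
      field_simp
      rw [Real.sqrt_sq hsd.le]
    nlinarith [h1, h2]
  have hxS : ∀ a ∈ S, x a = (Real.sqrt d)⁻¹ := by
    intro a ha
    have := (Finset.sum_eq_zero_iff_of_nonneg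
      (fun a _ => sq_nonneg (x a - (Real.sqrt d)⁻¹))).mp key a ha
    have := pow_eq_zero_iff (n := 2) (by norm_num) |>.mp this
    linarith [sub_eq_zero.mp this]
  -- conclude
  funext a
  have hval : ((Real.sqrt d)⁻¹ • (N *ᵥ Pi.single v 1)) a =
      (Real.sqrt d)⁻¹ * N a v := by
    simp [Matrix.mulVec, dotProduct, Pi.single_apply]
  rw [hval]
  rcases hN01 a v with h | h
  · rw [h, hxsupp a h]; ring
  · have : a ∈ S := by simp [hS, h]
    rw [h, hxS a this]; ring
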